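/- Let q ∈ ℝ^r have nonnegative entries. The set R(q) = {z ∈ ℝⁿ : P z ≤ q} is robust positively invariant for the system x⁺ = A x + w, w ∈ W (i.e., A x + w ∈ R(q) for all x ∈ R(q) and w ∈ W), if and only if c(q) + d ≤ b(q) componentwise. -/
import Mathlib


open Matrix

/-- Support function `h(X, v) = sup {vᵀ x : x ∈ X}`. -/
noncomputable def suppFn {n : ℕ} (X : Set (Fin n → ℝ)) (v : Fin n → ℝ) : ℝ :=
  sSup ((fun x => v ⬝ᵥ x) '' X)

/-- `R(q) = {z : P z ≤ q}`. -/
def Rset {n r : ℕ} (P : Matrix (Fin r) (Fin n) ℝ) (q : Fin r → ℝ) : Set (Fin n → ℝ) :=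
  {z : Fin n → ℝ | P.mulVec z ≤ q}

/-- `b_i(q) = h(R(q), P_iᵀ)`. -/
noncomputable def bfun {n r : ℕ} (P : Matrix (Fin r) (Fin n) ℝ) (q : Fin r → ℝ) :
    Fin r → ℝ :=
  fun i => suppFn (Rset P q) (P i)

/-- `c_i(q) = h(A·R(q), P_iᵀ)`. -/
noncomputable def cfun {n r : ℕ} (A : Matrix (Fin n) (Fin n) ℝ)
    (P : Matrix (Fin r) (Fin n) ℝ) (q : Fin r → ℝ) : Fin r → ℝ :=
  fun i => suppFn (A.mulVec '' Rset P q) (P i)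

/-- `d_i = h(W, P_iᵀ)` where `W = {w : F w ≤ g}`. -/
noncomputable def dvec {n r p : ℕ} (F : Matrix (Fin p) (Fin n) ℝ) (g : Fin p → ℝ)
    (P : Matrix (Fin r) (Fin n) ℝ) : Fin r → ℝ :=
  fun i => suppFn {w : Fin n → ℝ | F.mulVec w ≤ g} (P i)

/-- `R` is robust positively invariant for `x⁺ = A x + w`, `w ∈ W`. -/
def IsRPI {n : ℕ} (A : Matrix (Fin n) (Fin n) ℝ) (W R : Set (Fin n → ℝ)) : Prop :=
  ∀ x ∈ R, ∀ w ∈ W, A.mulVec x + w ∈ R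


lemma mulVec_apply_continuous {n r : ℕ} (P : Matrix (Fin r) (Fin n) ℝ) (i : Fin r) :
    Continuous fun z : Fin n → ℝ => P.mulVec z i := by
  simp only [Matrix.mulVec, dotProduct]
  exact continuous_finset_sum _ fun j _ => continuous_const.mul (continuous_apply j)

lemma Rset_isBounded {n r : ℕ} (P : Matrix (Fin r) (Fin n) ℝ)
    (hP0 : {z : Fin n → ℝ | P.mulVec z ≤ 0} = {0})
    (q : Fin r → ℝ) (hq : 0 ≤ q) :
    Bornology.IsBounded {z : Fin n → ℝ | P.mulVec z ≤ q} := by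
  rcases Nat.eq_zero_or_pos n with hn | hn
  · subst hn
    exact (Set.subsingleton_of_subsingleton (s := {z : Fin 0 → ℝ | P.mulVec z ≤ q})).finite.isBounded
  · haveI : Nonempty (Fin n) := ⟨⟨0, hn⟩⟩
    set G : (Fin n → ℝ) → ℝ := fun z => ‖fun i => max (P.mulVec z i) 0‖ with hG
    have hGcont : Continuous G := by
      apply Continuous.norm
      apply continuous_pi
      intro i
      exact (mulVec_apply_continuous P i).max continuous_const
    have hGzero : ∀ z, G z = 0 → z = 0 := by
      intro z hz
      have hz' : ∀ i, max (P.mulVec z i) 0 = 0 := by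
        intro i
        have h1 : ‖(fun i => max (P.mulVec z i) 0) i‖ ≤ G z := norm_le_pi_norm (fun i => max (P.mulVec z i) 0) i
        simp only [Real.norm_eq_abs] at h1
        rw [hz] at h1
        have := abs_nonneg (max (P.mulVec z i) 0)
        have := le_max_right (P.mulVec z i) (0:ℝ)
        rw [abs_of_nonneg ‹(0:ℝ) ≤ max (P.mulVec z i) 0›] at h1
        linarith
      have hzle : P.mulVec z ≤ 0 := by
        intro i
        have := hz' i
        by_contra hcon
        push_neg at hcon
        simp only [Pi.zero_apply] at hcon
        rw [max_eq_left hcon.le] at this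
        linarith
      have : z ∈ {z : Fin n → ℝ | P.mulVec z ≤ 0} := hzle
      rw [hP0] at this
      exact this
    -- minimum on sphere
    have hsph : (Metric.sphere (0 : Fin n → ℝ) 1).Nonempty := by
      rw [NormedSpace.sphere_nonempty]; norm_num
    have hsphc : IsCompact (Metric.sphere (0 : Fin n → ℝ) 1) :=
      isCompact_sphere _ _
    obtain ⟨z₀, hz₀mem, hz₀min⟩ := hsphc.exists_isMinOn hsph hGcont.continuousOn
    set ε := G z₀ with hε
    have hεpos : 0 < ε := by
      rcases lt_or_eq_of_le (norm_nonneg _ : (0:ℝ) ≤ G z₀) with h | h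
      · exact h
      · exfalso
        have hz0 : z₀ = 0 := hGzero z₀ h.symm
        rw [mem_sphere_zero_iff_norm, hz0, norm_zero] at hz₀mem
        norm_num at hz₀mem
    -- homogeneity + lower bound
    have hlow : ∀ z : Fin n → ℝ, ε * ‖z‖ ≤ G z := by
      intro z
      rcases eq_or_ne z 0 with hz | hz
      · subst hz
        simp only [norm_zero, mul_zero]
        exact norm_nonneg _
      · have hnz : 0 < ‖z‖ := norm_pos_iff.mpr hz
        set c := ‖z‖⁻¹ with hc
        have hcpos : 0 < c := inv_pos.mpr hnz
        have hmem : c • z ∈ Metric.sphere (0 : Fin n → ℝ) 1 := by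
          rw [mem_sphere_zero_iff_norm, norm_smul, norm_inv, norm_norm]
          field_simp
        have hεle : ε ≤ G (c • z) := hz₀min hmem
        have hGsm : G (c • z) = c * G z := by
          have : (fun i => max (P.mulVec (c • z) i) 0) = c • (fun i => max (P.mulVec z i) 0) := by
            funext i
            rw [Matrix.mulVec_smul]
            simp only [Pi.smul_apply, smul_eq_mul]
            rw [mul_max_of_nonneg _ _ hcpos.le, mul_zero]
          rw [hG]
          simp only [this, norm_smul, norm_inv, Real.norm_eq_abs, abs_of_pos hcpos]
        rw [hGsm] at hεle
        have : ε * ‖z‖ ≤ c * G z * ‖z‖ := by nlinarith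
        calc ε * ‖z‖ ≤ c * G z * ‖z‖ := this
          _ = G z := by rw [hc]; field_simp
    -- upper bound on the set
    have hup : ∀ z ∈ {z : Fin n → ℝ | P.mulVec z ≤ q}, G z ≤ ‖q‖ := by
      intro z hz
      rw [hG]
      apply pi_norm_le_iff_of_nonneg (norm_nonneg q) |>.mpr
      intro i
      have h1 : P.mulVec z i ≤ q i := hz i
      have h2 : q i ≤ ‖q‖ := le_trans (le_abs_self _) (norm_le_pi_norm q i)
      rw [Real.norm_eq_abs, abs_of_nonneg (le_max_right _ _)]
      exact max_le (le_trans h1 h2) (norm_nonneg q)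
    apply Bornology.IsBounded.subset (Metric.isBounded_closedBall (x := (0:Fin n → ℝ)) (r := ‖q‖ / ε))
    intro z hz
    rw [Metric.mem_closedBall, dist_zero_right]
    have := le_trans (hlow z) (hup z hz)
    rw [le_div_iff₀ hεpos]
    linarith

lemma Rset_isCompact {n r : ℕ} (P : Matrix (Fin r) (Fin n) ℝ)
    (hP0 : {z : Fin n → ℝ | P.mulVec z ≤ 0} = {0})
    (q : Fin r → ℝ) (hq : 0 ≤ q) :
    IsCompact {z : Fin n → ℝ | P.mulVec z ≤ q} := by
  have hcl : IsClosed {z : Fin n → ℝ | P.mulVec z ≤ q} := by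
    have : {z : Fin n → ℝ | P.mulVec z ≤ q} = ⋂ i, {z | P.mulVec z i ≤ q i} := by
      ext z; simp [Pi.le_def, Set.mem_iInter]
    rw [this]
    exact isClosed_iInter fun i => isClosed_le (mulVec_apply_continuous P i) continuous_const
  exact Metric.isCompact_of_isClosed_isBounded hcl (Rset_isBounded P hP0 q hq)

/-- `R(q)` is RPI for `x⁺ = A x + w`, `w ∈ W`, iff `c(q) + d ≤ b(q)`
componentwise. -/
theorem rpi_iff_support_ineq
    (n r p : ℕ)
    (A : Matrix (Fin n) (Fin n) ℝ)
    (F : Matrix (Fin p) (Fin n) ℝ) (g : Fin p → ℝ)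
    (hg : ∀ j, 0 < g j)
    (W : Set (Fin n → ℝ)) (hW : W = {w : Fin n → ℝ | F.mulVec w ≤ g})
    (hWcompact : IsCompact W)
    (P : Matrix (Fin r) (Fin n) ℝ)
    (hspan : Submodule.span ℝ (Set.range fun i => P i) = ⊤)
    (hP0 : {z : Fin n → ℝ | P.mulVec z ≤ 0} = {0})
    (q : Fin r → ℝ) (hq : 0 ≤ q) :
    IsRPI A W (Rset P q) ↔ cfun A P q + dvec F g P ≤ bfun P q := by

  classical
  -- basic memberships
  have h0R : (0 : Fin n → ℝ) ∈ Rset P q := by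
    show P.mulVec 0 ≤ q
    rw [Matrix.mulVec_zero]; exact hq
  have h0W : (0 : Fin n → ℝ) ∈ W := by
    rw [hW]
    show F.mulVec 0 ≤ g
    rw [Matrix.mulVec_zero]
    exact fun j => (hg j).le
  have hRc : IsCompact (Rset P q) := Rset_isCompact P hP0 q hq
  -- the three sets per index
  have hdot : ∀ (i : Fin r) (z : Fin n → ℝ), P i ⬝ᵥ z = P.mulVec z i := fun _ _ => rfl
  have hcontdot : ∀ i : Fin r, Continuous fun z : Fin n → ℝ => P i ⬝ᵥ z := by
    intro i
    simpa only [hdot] using mulVec_apply_continuous P i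
  have hbddB : ∀ i, BddAbove ((fun x => P i ⬝ᵥ x) '' Rset P q) := by
    intro i
    refine ⟨q i, ?_⟩
    rintro a ⟨x, hx, rfl⟩
    simpa [hdot] using hx i
  have hcontAdot : ∀ i : Fin r, Continuous fun z : Fin n → ℝ => P i ⬝ᵥ A.mulVec z := by
    intro i
    have : Continuous fun z : Fin n → ℝ => A.mulVec z := by
      apply continuous_pi
      intro j
      exact mulVec_apply_continuous A j
    exact (hcontdot i).comp this
  have hcCset : ∀ i, (fun x => P i ⬝ᵥ x) '' (A.mulVec '' Rset P q)
      = (fun x => P i ⬝ᵥ A.mulVec x) '' Rset P q := by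
    intro i; rw [Set.image_image]
  have hbddC : ∀ i, BddAbove ((fun x => P i ⬝ᵥ A.mulVec x) '' Rset P q) := by
    intro i
    exact (hRc.image (hcontAdot i)).bddAbove
  have hbddD : ∀ i, BddAbove ((fun x => P i ⬝ᵥ x) '' W) := by
    intro i
    exact (hWcompact.image (hcontdot i)).bddAbove
  have hneC : ∀ i, ((fun x => P i ⬝ᵥ A.mulVec x) '' Rset P q).Nonempty :=
    fun i => ⟨_, Set.mem_image_of_mem _ h0R⟩
  have hneD : ∀ i, ((fun x => P i ⬝ᵥ x) '' W).Nonempty :=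
    fun i => ⟨_, Set.mem_image_of_mem _ h0W⟩
  have hneB : ∀ i, ((fun x => P i ⬝ᵥ x) '' Rset P q).Nonempty :=
    fun i => ⟨_, Set.mem_image_of_mem _ h0R⟩
  -- d as sup over W
  have hdvec : ∀ i, dvec F g P i = sSup ((fun x => P i ⬝ᵥ x) '' W) := by
    intro i; rw [dvec, suppFn, hW]
  have hcfun : ∀ i, cfun A P q i = sSup ((fun x => P i ⬝ᵥ A.mulVec x) '' Rset P q) := by
    intro i; rw [cfun, suppFn, hcCset]
  have hb_le : ∀ i, bfun P q i ≤ q i := by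
    intro i
    apply csSup_le (hneB i)
    rintro a ⟨x, hx, rfl⟩
    simpa [hdot] using hx i
  
  constructor
  · intro hRPI i0
    have key : ∀ a ∈ (fun x => P i0 ⬝ᵥ A.mulVec x) '' Rset P q,
        ∀ b ∈ (fun x => P i0 ⬝ᵥ x) '' W, a + b ≤ bfun P q i0 := by
      rintro a ⟨x, hx, rfl⟩ b ⟨w, hw, rfl⟩
      have hmem : A.mulVec x + w ∈ Rset P q := hRPI x hx w hw
      have : P i0 ⬝ᵥ (A.mulVec x + w) = P i0 ⬝ᵥ A.mulVec x + P i0 ⬝ᵥ w :=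
        dotProduct_add _ _ _
      rw [← this]
      exact le_csSup (hbddB i0) (Set.mem_image_of_mem _ hmem)
    show cfun A P q i0 + dvec F g P i0 ≤ bfun P q i0
    rw [hcfun, hdvec]
    have h2 : ∀ a ∈ (fun x => P i0 ⬝ᵥ A.mulVec x) '' Rset P q,
        sSup ((fun x => P i0 ⬝ᵥ x) '' W) ≤ bfun P q i0 - a := by
      intro a ha
      apply csSup_le (hneD i0)
      intro b hb
      linarith [key a ha b hb]
    have h1 : sSup ((fun x => P i0 ⬝ᵥ A.mulVec x) '' Rset P q)
        ≤ bfun P q i0 - sSup ((fun x => P i0 ⬝ᵥ x) '' W) := by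
      apply csSup_le (hneC i0)
      intro a ha
      linarith [h2 a ha]
    linarith
  · intro hle x hx w hw
    show P.mulVec (A.mulVec x + w) ≤ q
    intro i
    rw [Matrix.mulVec_add, Pi.add_apply]
    have hc : P.mulVec (A.mulVec x) i ≤ cfun A P q i := by
      rw [hcfun, ← hdot]
      exact le_csSup (hbddC i) (Set.mem_image_of_mem _ hx)
    have hd : P.mulVec w i ≤ dvec F g P i := by
      rw [hdvec, ← hdot]
      exact le_csSup (hbddD i) (Set.mem_image_of_mem _ hw)
    have := hle i
    rw [Pi.add_apply] at this
    linarith [hb_le i]
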